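/- Suppose (as in Step 8 of Tate's algorithm for Kodaira type IV^*) that v(a₁) ≥ 1, v(a₂) ≥ 2, v(a₃) ≥ 2, v(a₄) ≥ 3, v(a₆) ≥ 4 and v(b₆) = v(a₃² + 4a₆) = 4. Let P = (x, y) be a point on E with v(x) > 0 and v(y) > 0, and assume v(φ₃(P)) ≤ v(ψ₃²(P)) (i.e. m_P = 3). Then v(x) ≥ 2, v(ψ₂²(P)) = 4, v(ψ₄(P)) = 5·v(ψ₂(P)), and v(φ₃(P)) = 3·v(ψ₂²(P)) = 12. -/
import Mathlib

open Polynomial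

/-- (Step 8 of Tate's algorithm, Kodaira type `IV^*`.)  Let `K` be a field with a normalised
discrete valuation `v` with uniformiser `π`, and let `E/K` be a Weierstrass curve with
`v(a₁) ≥ 1`, `v(a₂) ≥ 2`, `v(a₃) ≥ 2`, `v(a₄) ≥ 3`, `v(a₆) ≥ 4` and
`v(b₆) = v(a₃² + 4a₆) = 4`.  Let `P = (x, y)` be a point on `E` with `v(x) > 0` and
`v(y) > 0`, and assume `v(φ₃(P)) ≤ v(ψ₃²(P))` (i.e. `m_P = 3`).  Then `v(x) ≥ 2`,
`v(ψ₂²(P)) = 4`, `v(ψ₄(P)) = 5·v(ψ₂(P))`, and `v(φ₃(P)) = 3·v(ψ₂²(P)) = 12`. -/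
theorem greatest_common_valuation_stmt_13 {K : Type*} [Field K]
    (v : K → WithTop ℤ)
    (hv_top : ∀ z : K, v z = ⊤ ↔ z = 0)
    (hv_mul : ∀ z w : K, v (z * w) = v z + v w)
    (hv_add : ∀ z w : K, min (v z) (v w) ≤ v (z + w))
    (π : K) (hπ : v π = 1)
    (W : WeierstrassCurve K)
    (ha₁ : 1 ≤ v W.a₁) (ha₂ : ((2 : ℤ) : WithTop ℤ) ≤ v W.a₂)
    (ha₃ : ((2 : ℤ) : WithTop ℤ) ≤ v W.a₃) (ha₄ : ((3 : ℤ) : WithTop ℤ) ≤ v W.a₄)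
    (ha₆ : ((4 : ℤ) : WithTop ℤ) ≤ v W.a₆)
    (hb₆ : v (W.a₃ ^ 2 + 4 * W.a₆) = ((4 : ℤ) : WithTop ℤ))
    (x y : K) (hP : W.toAffine.Equation x y) (hx : 0 < v x) (hy : 0 < v y)
    (hle : v ((W.φ 3).evalEval x y) ≤ v ((W.ψ 3).evalEval x y ^ 2)) :
    ((2 : ℤ) : WithTop ℤ) ≤ v x ∧
    v (W.Ψ₂Sq.eval x) = ((4 : ℤ) : WithTop ℤ) ∧
    v ((W.ψ 4).evalEval x y) = 5 • v ((W.ψ 2).evalEval x y) ∧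
    v ((W.φ 3).evalEval x y) = 3 • v (W.Ψ₂Sq.eval x) ∧
    v ((W.φ 3).evalEval x y) = ((12 : ℤ) : WithTop ℤ) := by
  clear hle hπ
  -- basic facts about the valuation
  have hv1 : v 1 = 0 := by
    have h := hv_mul 1 1
    rw [one_mul] at h
    obtain ⟨n, hn⟩ := WithTop.ne_top_iff_exists.mp
      (fun h' => one_ne_zero ((hv_top 1).mp h'))
    rw [← hn] at h ⊢
    have hn' : n = n + n := by exact_mod_cast h
    have hz : n = 0 := by omega
    exact_mod_cast hz
  have hvm1 : v (-1 : K) = 0 := by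
    have h := hv_mul (-1 : K) (-1)
    rw [show ((-1 : K) * (-1)) = 1 by ring, hv1] at h
    obtain ⟨n, hn⟩ := WithTop.ne_top_iff_exists.mp
      (fun h' => (by norm_num : (-1 : K) ≠ 0) ((hv_top _).mp h'))
    rw [← hn] at h ⊢
    have hn' : (0 : ℤ) = n + n := by exact_mod_cast h
    have hz : n = 0 := by omega
    exact_mod_cast hz
  have hv_neg : ∀ z : K, v (-z) = v z := by
    intro z
    rw [show -z = (-1) * z by ring, hv_mul, hvm1, zero_add]
  have hv_add_eq : ∀ z w : K, v z < v w → v (z + w) = v z := by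
    intro z w h
    refine le_antisymm ?_ (le_trans (le_of_eq (min_eq_left h.le).symm) (hv_add z w))
    by_contra hc
    push_neg at hc
    have h3 : min (v (z + w)) (v w) ≤ v z := by
      have h4 := hv_add (z + w) (-w)
      rwa [add_neg_cancel_right, hv_neg] at h4
    exact absurd h3 (lt_min hc h).not_ge
  have hadd2 : ∀ {z w : K} {n : WithTop ℤ}, n ≤ v z → n ≤ v w → n ≤ v (z + w) := by
    intro z w n hz hw
    exact le_trans (le_min hz hw) (hv_add z w)
  have hsub2 : ∀ {z w : K} {n : WithTop ℤ}, n ≤ v z → n ≤ v w → n ≤ v (z - w) := by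
    intro z w n hz hw
    rw [sub_eq_add_neg]
    exact hadd2 hz (by rwa [hv_neg])
  have hmul2 : ∀ {z w : K} {a b c : ℤ}, (a : WithTop ℤ) ≤ v z → (b : WithTop ℤ) ≤ v w →
      a + b = c → ((c : ℤ) : WithTop ℤ) ≤ v (z * w) := by
    intro z w a b c hz hw habc
    rw [hv_mul, ← habc, WithTop.coe_add]
    exact add_le_add hz hw
  have hmul3 : ∀ {z w u : K} {a b c d : ℤ}, (a : WithTop ℤ) ≤ v z → (b : WithTop ℤ) ≤ v w →
      (c : WithTop ℤ) ≤ v u → a + b + c = d → ((d : ℤ) : WithTop ℤ) ≤ v (z * w * u) := by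
    intro z w u a b c d hz hw hu h
    exact hmul2 (hmul2 hz hw rfl) hu h
  have hwk : ∀ {a b : ℤ} {c : WithTop ℤ}, ((b : ℤ) : WithTop ℤ) ≤ c → a ≤ b →
      ((a : ℤ) : WithTop ℤ) ≤ c := by
    intro a b c h hab
    exact le_trans (by exact_mod_cast hab) h
  have hltcast : ∀ {a b : ℤ} {c : WithTop ℤ}, ((b : ℤ) : WithTop ℤ) ≤ c → a < b →
      ((a : ℤ) : WithTop ℤ) < c := by
    intro a b c h hab
    exact lt_of_lt_of_le (by exact_mod_cast hab) h
  have hns : ∀ (n : ℕ) (m : ℤ), n • ((m : ℤ) : WithTop ℤ) = ((n * m : ℤ) : WithTop ℤ) := by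
    intro n m
    induction n with
    | zero => simp
    | succ k ih =>
      rw [succ_nsmul, ih, ← WithTop.coe_add]
      congr 1
      push_cast
      ring
  -- valuations of small integers
  have ha₁' : ((1 : ℤ) : WithTop ℤ) ≤ v W.a₁ := by exact_mod_cast ha₁
  have h1' : ((0 : ℤ) : WithTop ℤ) ≤ v (1 : K) := by rw [hv1]; exact_mod_cast le_refl (0 : ℤ)
  have h2' : ((0 : ℤ) : WithTop ℤ) ≤ v (2 : K) := by
    rw [show (2 : K) = 1 + 1 by norm_num]
    exact hadd2 h1' h1'
  have h3' : ((0 : ℤ) : WithTop ℤ) ≤ v (3 : K) := by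
    rw [show (3 : K) = 2 + 1 by norm_num]
    exact hadd2 h2' h1'
  have h4' : ((0 : ℤ) : WithTop ℤ) ≤ v (4 : K) := by
    rw [show (4 : K) = 2 * 2 by norm_num]
    exact hmul2 h2' h2' rfl
  have h5' : ((0 : ℤ) : WithTop ℤ) ≤ v (5 : K) := by
    rw [show (5 : K) = 4 + 1 by norm_num]
    exact hadd2 h4' h1'
  have h10' : ((0 : ℤ) : WithTop ℤ) ≤ v (10 : K) := by
    rw [show (10 : K) = 2 * 5 by norm_num]
    exact hmul2 h2' h5' rfl
  -- valuations of the b-invariants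
  have hvb₂ : ((2 : ℤ) : WithTop ℤ) ≤ v W.b₂ := by
    rw [show W.b₂ = W.a₁ * W.a₁ + 4 * W.a₂ by rw [WeierstrassCurve.b₂]; try ring]
    exact hadd2 (hmul2 ha₁' ha₁' rfl) (hmul2 h4' ha₂ rfl)
  have hvb₄ : ((3 : ℤ) : WithTop ℤ) ≤ v W.b₄ := by
    rw [show W.b₄ = 2 * W.a₄ + W.a₁ * W.a₃ by rw [WeierstrassCurve.b₄]; try ring]
    exact hadd2 (hmul2 h2' ha₄ rfl) (hmul2 ha₁' ha₃ rfl)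
  have hvb₆ : v W.b₆ = ((4 : ℤ) : WithTop ℤ) := by
    rw [show W.b₆ = W.a₃ ^ 2 + 4 * W.a₆ from rfl]
    exact hb₆
  have hvb₈ : ((6 : ℤ) : WithTop ℤ) ≤ v W.b₈ := by
    rw [show W.b₈ = W.a₁ * W.a₁ * W.a₆ + 4 * W.a₂ * W.a₆ - W.a₁ * W.a₃ * W.a₄
        + W.a₂ * (W.a₃ * W.a₃) - W.a₄ * W.a₄ by rw [WeierstrassCurve.b₈]; try ring]
    exact hsub2 (hadd2 (hsub2 (hadd2 (hmul3 ha₁' ha₁' ha₆ rfl)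
      (hmul3 h4' ha₂ ha₆ rfl)) (hmul3 ha₁' ha₃ ha₄ rfl))
      (hmul2 ha₂ (hmul2 ha₃ ha₃ rfl) rfl)) (hmul2 ha₄ ha₄ rfl)
  -- the equation
  have heq : y ^ 2 + W.a₁ * x * y + W.a₃ * y = x ^ 3 + W.a₂ * x ^ 2 + W.a₄ * x + W.a₆ := by
    rw [WeierstrassCurve.Affine.equation_iff] at hP
    linear_combination hP
  -- `v x ≥ 1` and `v y ≥ 1`
  have hone : ∀ {a : WithTop ℤ}, 0 < a → ((1 : ℤ) : WithTop ℤ) ≤ a := by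
    intro a h
    induction a using WithTop.recTopCoe with
    | top => exact le_top
    | coe n =>
      have : (0 : ℤ) < n := by exact_mod_cast h
      exact_mod_cast this
  have hbetw : ∀ {a : WithTop ℤ}, a < ((2 : ℤ) : WithTop ℤ) → ((1 : ℤ) : WithTop ℤ) ≤ a →
      a = ((1 : ℤ) : WithTop ℤ) := by
    intro a h h1
    induction a using WithTop.recTopCoe with
    | top => exact absurd le_top h.not_ge
    | coe n =>
      have h1' : (1 : ℤ) ≤ n := by exact_mod_cast h1
      have h2' : n < 2 := by exact_mod_cast h
      have : n = 1 := by omega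
      rw [this]
  have hhalf : ∀ {a : WithTop ℤ}, a + a = ((4 : ℤ) : WithTop ℤ) → a = ((2 : ℤ) : WithTop ℤ) := by
    intro a h
    induction a using WithTop.recTopCoe with
    | top => simp at h
    | coe n =>
      have : n + n = (4 : ℤ) := by exact_mod_cast h
      have hn2 : n = 2 := by omega
      rw [hn2]
  have hx1 : ((1 : ℤ) : WithTop ℤ) ≤ v x := hone hx
  have hy1 : ((1 : ℤ) : WithTop ℤ) ≤ v y := hone hy
  -- `v x ≥ 2`
  have hx2 : ((2 : ℤ) : WithTop ℤ) ≤ v x := by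
    by_contra hc
    push_neg at hc
    have hvx : v x = ((1 : ℤ) : WithTop ℤ) := hbetw hc hx1
    -- RHS has valuation 3
    have hx3 : v (x ^ 3) = ((3 : ℤ) : WithTop ℤ) := by
      rw [show x ^ 3 = x * x * x by ring, hv_mul, hv_mul, hvx, ← WithTop.coe_add,
        ← WithTop.coe_add]
      norm_num
    have hrest : ((4 : ℤ) : WithTop ℤ) ≤ v (W.a₂ * x ^ 2 + W.a₄ * x + W.a₆) := by
      refine hadd2 (hadd2 ?_ ?_) ha₆
      · rw [show W.a₂ * x ^ 2 = W.a₂ * x * x by ring]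
        exact hmul3 ha₂ hx1 hx1 rfl
      · exact hmul2 ha₄ hx1 rfl
    have hRHS : v (x ^ 3 + W.a₂ * x ^ 2 + W.a₄ * x + W.a₆) = ((3 : ℤ) : WithTop ℤ) := by
      rw [show x ^ 3 + W.a₂ * x ^ 2 + W.a₄ * x + W.a₆
          = x ^ 3 + (W.a₂ * x ^ 2 + W.a₄ * x + W.a₆) by ring,
        hv_add_eq _ _ (by rw [hx3]; exact hltcast hrest (by norm_num)), hx3]
    -- LHS cannot have valuation 3
    have hLHS : v (y ^ 2 + W.a₁ * x * y + W.a₃ * y) = ((3 : ℤ) : WithTop ℤ) := by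
      rw [heq]; exact hRHS
    have hfac : y ^ 2 + W.a₁ * x * y + W.a₃ * y = y * (y + (W.a₁ * x + W.a₃)) := by ring
    have htail : ((2 : ℤ) : WithTop ℤ) ≤ v (W.a₁ * x + W.a₃) :=
      hadd2 (hmul2 ha₁' hx1 rfl) ha₃
    rcases lt_or_ge (v y) (((2 : ℤ) : WithTop ℤ)) with h | h
    · have hvy : v y = ((1 : ℤ) : WithTop ℤ) := hbetw h hy1
      have : v (y ^ 2 + W.a₁ * x * y + W.a₃ * y) = ((2 : ℤ) : WithTop ℤ) := by
        rw [hfac, hv_mul, hv_add_eq _ _ (by rw [hvy]; exact hltcast htail (by norm_num)), hvy,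
          ← WithTop.coe_add]
        norm_num
      rw [this] at hLHS
      exact absurd hLHS (by exact_mod_cast (by norm_num : (2 : ℤ) ≠ 3))
    · have : ((4 : ℤ) : WithTop ℤ) ≤ v (y ^ 2 + W.a₁ * x * y + W.a₃ * y) := by
        rw [hfac, hv_mul]
        have h2 : ((2 : ℤ) : WithTop ℤ) ≤ v (y + (W.a₁ * x + W.a₃)) := hadd2 h htail
        calc ((4 : ℤ) : WithTop ℤ) = ((2 : ℤ) : WithTop ℤ) + ((2 : ℤ) : WithTop ℤ) := by
              rw [← WithTop.coe_add]; norm_num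
          _ ≤ v y + v (y + (W.a₁ * x + W.a₃)) := add_le_add h h2
      rw [hLHS] at this
      exact absurd this (by exact_mod_cast (by norm_num : ¬ (4 : ℤ) ≤ 3))
  -- powers of x
  have hx_2 : ((4 : ℤ) : WithTop ℤ) ≤ v (x ^ 2) := by
    rw [show x ^ 2 = x * x by ring]; exact hmul2 hx2 hx2 rfl
  have hx_3 : ((6 : ℤ) : WithTop ℤ) ≤ v (x ^ 3) := by
    rw [show x ^ 3 = x ^ 2 * x by ring]; exact hmul2 hx_2 hx2 rfl
  have hx_4 : ((8 : ℤ) : WithTop ℤ) ≤ v (x ^ 4) := by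
    rw [show x ^ 4 = x ^ 3 * x by ring]; exact hmul2 hx_3 hx2 rfl
  have hx_5 : ((10 : ℤ) : WithTop ℤ) ≤ v (x ^ 5) := by
    rw [show x ^ 5 = x ^ 4 * x by ring]; exact hmul2 hx_4 hx2 rfl
  have hx_6 : ((12 : ℤ) : WithTop ℤ) ≤ v (x ^ 6) := by
    rw [show x ^ 6 = x ^ 5 * x by ring]; exact hmul2 hx_5 hx2 rfl
  -- value of `ψ₂²`
  have hraw : v (4 * x ^ 3 + W.b₂ * x ^ 2 + 2 * W.b₄ * x + W.b₆) = ((4 : ℤ) : WithTop ℤ) := by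
    have hA : ((5 : ℤ) : WithTop ℤ) ≤ v (4 * x ^ 3 + W.b₂ * x ^ 2 + 2 * W.b₄ * x) := by
      refine hadd2 (hadd2 ?_ ?_) (hmul3 h2' hvb₄ hx2 rfl)
      · exact hwk (hmul2 h4' hx_3 rfl) (by norm_num)
      · exact hwk (hmul2 hvb₂ hx_2 rfl) (by norm_num)
    rw [show 4 * x ^ 3 + W.b₂ * x ^ 2 + 2 * W.b₄ * x + W.b₆
        = W.b₆ + (4 * x ^ 3 + W.b₂ * x ^ 2 + 2 * W.b₄ * x) by ring,
      hv_add_eq _ _ (by rw [hvb₆]; exact hltcast hA (by norm_num)), hvb₆]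
  have hΨ2Sqx : W.Ψ₂Sq.eval x = 4 * x ^ 3 + W.b₂ * x ^ 2 + 2 * W.b₄ * x + W.b₆ := by
    simp [WeierstrassCurve.Ψ₂Sq]
  have hΨval : v (W.Ψ₂Sq.eval x) = ((4 : ℤ) : WithTop ℤ) := by rw [hΨ2Sqx]; exact hraw
  -- value of `ψ₂`
  have hψ2 : (W.ψ 2).evalEval x y = 2 * y + W.a₁ * x + W.a₃ := by
    rw [WeierstrassCurve.ψ_two, WeierstrassCurve.ψ₂]
    simp [WeierstrassCurve.Affine.evalEval_polynomialY]
  have hψ2sq_id : (2 * y + W.a₁ * x + W.a₃) ^ 2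
      = 4 * x ^ 3 + W.b₂ * x ^ 2 + 2 * W.b₄ * x + W.b₆ := by
    rw [WeierstrassCurve.Affine.equation_iff] at hP
    simp only [WeierstrassCurve.b₂, WeierstrassCurve.b₄, WeierstrassCurve.b₆]
    linear_combination 4 * hP
  have hψ2v : v (2 * y + W.a₁ * x + W.a₃) = ((2 : ℤ) : WithTop ℤ) := by
    have hsq : v (2 * y + W.a₁ * x + W.a₃) + v (2 * y + W.a₁ * x + W.a₃)
        = ((4 : ℤ) : WithTop ℤ) := by
      rw [← hv_mul, ← sq, hψ2sq_id]; exact hraw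
    exact hhalf hsq
  -- value of `preΨ₄.eval x`
  have hpre4x : W.preΨ₄.eval x = 2 * x ^ 6 + W.b₂ * x ^ 5 + 5 * W.b₄ * x ^ 4
      + 10 * W.b₆ * x ^ 3 + 10 * W.b₈ * x ^ 2 + (W.b₂ * W.b₈ - W.b₄ * W.b₆) * x
      + (W.b₄ * W.b₈ - W.b₆ ^ 2) := by
    simp [WeierstrassCurve.preΨ₄]
  have hconst : v (W.b₄ * W.b₈ - W.b₆ ^ 2) = ((8 : ℤ) : WithTop ℤ) := by
    have hb62 : v (W.b₆ ^ 2) = ((8 : ℤ) : WithTop ℤ) := by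
      rw [show W.b₆ ^ 2 = W.b₆ * W.b₆ by ring, hv_mul, hvb₆, ← WithTop.coe_add]
      norm_num
    have hb48 : ((9 : ℤ) : WithTop ℤ) ≤ v (W.b₄ * W.b₈) := hmul2 hvb₄ hvb₈ rfl
    rw [show W.b₄ * W.b₈ - W.b₆ ^ 2 = -(W.b₆ ^ 2) + W.b₄ * W.b₈ by ring,
      hv_add_eq _ _ (by rw [hv_neg, hb62]; exact hltcast hb48 (by norm_num)), hv_neg, hb62]
  have hgval : v (W.preΨ₄.eval x) = ((8 : ℤ) : WithTop ℤ) := by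
    have hrest : ((9 : ℤ) : WithTop ℤ) ≤ v (2 * x ^ 6 + W.b₂ * x ^ 5 + 5 * W.b₄ * x ^ 4
        + 10 * W.b₆ * x ^ 3 + 10 * W.b₈ * x ^ 2 + (W.b₂ * W.b₈ - W.b₄ * W.b₆) * x) := by
      refine hadd2 (hadd2 (hadd2 (hadd2 (hadd2 ?_ ?_) ?_) ?_) ?_) ?_
      · exact hwk (hmul2 h2' hx_6 rfl) (by norm_num)
      · exact hwk (hmul2 hvb₂ hx_5 rfl) (by norm_num)
      · exact hwk (hmul3 h5' hvb₄ hx_4 rfl) (by norm_num)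
      · exact hwk (hmul3 h10' (le_of_eq hvb₆.symm) hx_3 rfl) (by norm_num)
      · exact hwk (hmul3 h10' hvb₈ hx_2 rfl) (by norm_num)
      · have hc7 : ((7 : ℤ) : WithTop ℤ) ≤ v (W.b₂ * W.b₈ - W.b₄ * W.b₆) :=
          hsub2 (hwk (hmul2 hvb₂ hvb₈ rfl) (by norm_num))
            (hmul2 hvb₄ (le_of_eq hvb₆.symm) rfl)
        exact hmul2 hc7 hx2 rfl
    rw [hpre4x,
      show 2 * x ^ 6 + W.b₂ * x ^ 5 + 5 * W.b₄ * x ^ 4 + 10 * W.b₆ * x ^ 3 + 10 * W.b₈ * x ^ 2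
        + (W.b₂ * W.b₈ - W.b₄ * W.b₆) * x + (W.b₄ * W.b₈ - W.b₆ ^ 2)
        = (W.b₄ * W.b₈ - W.b₆ ^ 2) + (2 * x ^ 6 + W.b₂ * x ^ 5 + 5 * W.b₄ * x ^ 4
          + 10 * W.b₆ * x ^ 3 + 10 * W.b₈ * x ^ 2 + (W.b₂ * W.b₈ - W.b₄ * W.b₆) * x) by ring,
      hv_add_eq _ _ (by rw [hconst]; exact hltcast hrest (by norm_num)), hconst]
  -- value of `ψ₄`
  have hψ4 : (W.ψ 4).evalEval x y = W.preΨ₄.eval x * (W.ψ 2).evalEval x y := by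
    rw [WeierstrassCurve.ψ_four, WeierstrassCurve.ψ_two]
    simp [Polynomial.evalEval]
  have hψ4val : v ((W.ψ 4).evalEval x y) = ((10 : ℤ) : WithTop ℤ) := by
    rw [hψ4, hv_mul, hgval, hψ2, hψ2v, ← WithTop.coe_add]
    norm_num
  -- bound for `ψ₃`
  have hΨ3x : W.Ψ₃.eval x = 3 * x ^ 4 + W.b₂ * x ^ 3 + 3 * W.b₄ * x ^ 2 + 3 * W.b₆ * x
      + W.b₈ := by
    simp [WeierstrassCurve.Ψ₃]
  have hψ3b : ((6 : ℤ) : WithTop ℤ) ≤ v (W.Ψ₃.eval x) := by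
    rw [hΨ3x]
    refine hadd2 (hadd2 (hadd2 (hadd2 ?_ ?_) ?_) ?_) hvb₈
    · exact hwk (hmul2 h3' hx_4 rfl) (by norm_num)
    · exact hwk (hmul2 hvb₂ hx_3 rfl) (by norm_num)
    · exact hwk (hmul3 h3' hvb₄ hx_2 rfl) (by norm_num)
    · exact hwk (hmul3 h3' (le_of_eq hvb₆.symm) hx2 rfl) (by norm_num)
  -- value of `φ₃`
  have hφ3 : (W.φ 3).evalEval x y
      = x * (W.Ψ₃.eval x) ^ 2 - W.preΨ₄.eval x * ((W.ψ 2).evalEval x y) ^ 2 := by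
    rw [WeierstrassCurve.φ_three, WeierstrassCurve.ψ_two]
    simp [Polynomial.evalEval]
  have hφ3val : v ((W.φ 3).evalEval x y) = ((12 : ℤ) : WithTop ℤ) := by
    have hB : v (W.preΨ₄.eval x * ((W.ψ 2).evalEval x y) ^ 2) = ((12 : ℤ) : WithTop ℤ) := by
      rw [hψ2, hv_mul, show (2 * y + W.a₁ * x + W.a₃) ^ 2
          = (2 * y + W.a₁ * x + W.a₃) * (2 * y + W.a₁ * x + W.a₃) by ring, hv_mul, hgval,
        hψ2v, ← WithTop.coe_add, ← WithTop.coe_add]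
      norm_num
    have hA : ((14 : ℤ) : WithTop ℤ) ≤ v (x * (W.Ψ₃.eval x) ^ 2) := by
      rw [show x * (W.Ψ₃.eval x) ^ 2 = x * (W.Ψ₃.eval x * W.Ψ₃.eval x) by ring]
      exact hmul2 hx2 (hmul2 hψ3b hψ3b rfl) rfl
    rw [hφ3, show x * (W.Ψ₃.eval x) ^ 2 - W.preΨ₄.eval x * ((W.ψ 2).evalEval x y) ^ 2
        = -(W.preΨ₄.eval x * ((W.ψ 2).evalEval x y) ^ 2) + x * (W.Ψ₃.eval x) ^ 2 by ring,
      hv_add_eq _ _ (by rw [hv_neg, hB]; exact hltcast hA (by norm_num)), hv_neg, hB]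
  refine ⟨hx2, hΨval, ?_, ?_, hφ3val⟩
  · rw [hψ4val, hψ2, hψ2v, hns]
    norm_num
  · rw [hφ3val, hΨval, hns]
    norm_num
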